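/- Let N ≥ 1, let H_N be the N×N modified Bessel Hessenberg matrix, and let K_N(H_N,e_1) = [e_1, H_N e_1, …, H_N^{N−1} e_1] be the associated Krylov matrix. Then K_N(H_N,e_1) is invertible, and its inverse M = K_N(H_N,e_1)^{−1} has entries (indexing rows by ℓ = 0,…,N−1 and columns by k = 0,…,N−1): M_{0,0} = 1; M_{ℓ,0} = 0 for ℓ ≥ 1; and M_{ℓ,k} = 2 T_{k,ℓ} for k ≥ 1, where T_{k,ℓ} is the coefficient of x^ℓ in the k-th Chebyshev polynomial of the first kind T_k(x). -/

import Mathlib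

/-- The modified Bessel Hessenberg matrix: `(H_N)_{1,2} = 1`, subdiagonal entries `1/2`,
superdiagonal entries `1/2` (for rows `2 ≤ i ≤ N`), all indices here 1-based. -/
noncomputable def modBesselH (N : ℕ) : Matrix (Fin N) (Fin N) ℝ := fun i j =>
  if (i : ℕ) = 0 ∧ (j : ℕ) = 1 then 1
  else if (j : ℕ) + 1 = (i : ℕ) then 1/2
  else if (i : ℕ) + 1 = (j : ℕ) ∧ 1 ≤ (i : ℕ) then 1/2
  else 0

/-- The first standard basis vector of `ℝ^N`. -/
noncomputable def e1 (N : ℕ) : Fin N → ℝ := fun j => if (j : ℕ) = 0 then 1 else 0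

/-- The Krylov matrix `K_N(H, e₁) = [e₁, H e₁, …, H^(N-1) e₁]`. -/
noncomputable def krylov {N : ℕ} (H : Matrix (Fin N) (Fin N) ℝ) : Matrix (Fin N) (Fin N) ℝ :=
  fun i j => (H ^ (j : ℕ)).mulVec (e1 N) i

open Polynomial Matrix

/-- The candidate Krylov vector `T_k(H) e₁`. -/
noncomputable def chebVecAux (N k : ℕ) : Fin N → ℝ := fun i =>
  if (i : ℕ) = k then (if k = 0 then 1 else 1/2) else 0

lemma indicator_eq_single (N m : ℕ) (hm : m < N) (c : ℝ) :
    (fun j : Fin N => if (j : ℕ) = m then c else 0) = Pi.single (⟨m, hm⟩ : Fin N) c := by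
  funext j
  simp [Pi.single_apply, Fin.ext_iff, eq_comm]

lemma natDegree_T_le (k : ℕ) : (Polynomial.Chebyshev.T ℝ (k : ℤ)).natDegree ≤ k := by
  induction k using Nat.twoStepInduction with
  | zero => simp [Polynomial.Chebyshev.T_zero]
  | one => simp [Polynomial.Chebyshev.T_one, Polynomial.natDegree_X_le]
  | more n ih1 ih2 =>
      have h : ((n + 2 : ℕ) : ℤ) = (n : ℤ) + 2 := by push_cast; ring
      rw [h, Polynomial.Chebyshev.T_add_two]
      refine le_trans (Polynomial.natDegree_sub_le _ _) ?_
      have h1 : (2 * X * Polynomial.Chebyshev.T ℝ ((n : ℤ) + 1)).natDegree ≤ n + 2 := by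
        refine le_trans (Polynomial.natDegree_mul_le) ?_
        have e1' : ((n + 1 : ℕ) : ℤ) = (n : ℤ) + 1 := by push_cast; ring
        rw [← e1']
        have h2x := Polynomial.natDegree_mul_le (p := (2 : ℝ[X])) (q := X)
        have hX : (X : ℝ[X]).natDegree ≤ 1 := Polynomial.natDegree_X_le
        have h2 : (2 : ℝ[X]).natDegree = 0 := Polynomial.natDegree_ofNat 2
        have hT := ih2
        omega
      have h2 : (Polynomial.Chebyshev.T ℝ (n : ℤ)).natDegree ≤ n + 2 := le_trans ih1 (by omega)
      simp [h1, h2]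

lemma cheb_mulVec (N : ℕ) : ∀ k : ℕ, k < N →
    (Polynomial.aeval (modBesselH N) (Polynomial.Chebyshev.T ℝ (k : ℤ))).mulVec (e1 N)
      = chebVecAux N k := by
  intro k
  induction k using Nat.twoStepInduction with
  | zero =>
      intro hk
      funext i
      simp [Polynomial.Chebyshev.T_zero, Matrix.one_mulVec, e1, chebVecAux]
  | one =>
      intro hk
      have h0 : (0 : ℕ) < N := by omega
      funext i
      rw [show ((1 : ℕ) : ℤ) = 1 by norm_num, Polynomial.Chebyshev.T_one]
      simp only [Polynomial.aeval_X]
      rw [show (e1 N) = (fun j : Fin N => if (j : ℕ) = 0 then (1:ℝ) else 0) from funext fun j => rfl,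
        indicator_eq_single N 0 h0, Matrix.mulVec_single]
      simp only [chebVecAux, Pi.smul_apply, Matrix.col_apply, modBesselH]
      split_ifs <;> first | omega | tauto | (norm_num; try omega; try tauto)
  | more n ih1 ih2 =>
      intro hk
      have hn1 : n + 1 < N := by omega
      have hn : n < N := by omega
      have hrec : Polynomial.Chebyshev.T ℝ ((n + 2 : ℕ) : ℤ)
          = 2 * X * Polynomial.Chebyshev.T ℝ ((n + 1 : ℕ) : ℤ)
            - Polynomial.Chebyshev.T ℝ ((n : ℕ) : ℤ) := by
        have h := Polynomial.Chebyshev.T_add_two ℝ ((n : ℕ) : ℤ)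
        have e2 : ((n + 2 : ℕ) : ℤ) = ((n : ℕ) : ℤ) + 2 := by push_cast; ring
        have e1' : ((n + 1 : ℕ) : ℤ) = ((n : ℕ) : ℤ) + 1 := by push_cast; ring
        rw [e2, e1', h]
      rw [hrec]
      have hA : (Polynomial.aeval (modBesselH N) (Polynomial.Chebyshev.T ℝ ((n+1 : ℕ) : ℤ))).mulVec
          (e1 N) = chebVecAux N (n+1) := ih2 hn1
      have hB : (Polynomial.aeval (modBesselH N) (Polynomial.Chebyshev.T ℝ ((n : ℕ) : ℤ))).mulVec
          (e1 N) = chebVecAux N n := ih1 hn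
      have expand : Polynomial.aeval (modBesselH N)
          (2 * X * Polynomial.Chebyshev.T ℝ ((n+1 : ℕ) : ℤ) -
            Polynomial.Chebyshev.T ℝ ((n : ℕ) : ℤ))
          = modBesselH N * Polynomial.aeval (modBesselH N)
              (Polynomial.Chebyshev.T ℝ ((n+1 : ℕ) : ℤ))
            + modBesselH N * Polynomial.aeval (modBesselH N)
              (Polynomial.Chebyshev.T ℝ ((n+1 : ℕ) : ℤ))
            - Polynomial.aeval (modBesselH N) (Polynomial.Chebyshev.T ℝ ((n : ℕ) : ℤ)) := by
        simp only [two_mul, add_mul, map_sub, map_add, _root_.map_mul, Polynomial.aeval_X]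
      rw [expand, Matrix.sub_mulVec, Matrix.add_mulVec, ← Matrix.mulVec_mulVec, hA, hB]
      have hv : chebVecAux N (n + 1)
          = (fun j : Fin N => if (j : ℕ) = n + 1 then (1/2 : ℝ) else 0) := by
        funext j; simp [chebVecAux]
      rw [hv, indicator_eq_single N (n+1) hn1, Matrix.mulVec_single]
      funext i
      simp only [Pi.sub_apply, Pi.add_apply, chebVecAux, Pi.smul_apply, Matrix.col_apply, modBesselH]
      split_ifs <;> first | omega | tauto | (norm_num; try omega; try tauto)

lemma sum_mulVec' {N : ℕ} {ι : Type*} (s : Finset ι) (A : ι → Matrix (Fin N) (Fin N) ℝ)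
    (v : Fin N → ℝ) : (∑ j ∈ s, A j) *ᵥ v = ∑ j ∈ s, (A j) *ᵥ v := by
  funext i
  simp only [Matrix.mulVec, dotProduct, Finset.sum_apply, Matrix.sum_apply,
    Finset.sum_mul]
  rw [Finset.sum_comm]

/-- The Krylov matrix of the modified Bessel Hessenberg matrix with the first basis vector is
invertible, and its inverse `M` (rows indexed by `ℓ`, columns by `k`, both 0-based) satisfies
`M_{0,0} = 1`, `M_{ℓ,0} = 0` for `ℓ ≥ 1`, and `M_{ℓ,k} = 2 T_{k,ℓ}` for `k ≥ 1`, where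
`T_{k,ℓ}` is the coefficient of `x^ℓ` in the `k`-th Chebyshev polynomial of the first kind. -/
theorem krylov_modBesselH_inverse (N : ℕ) (hN : 1 ≤ N) :
    IsUnit (krylov (modBesselH N)) ∧
    (∀ l k : Fin N, (l : ℕ) = 0 → (k : ℕ) = 0 → (krylov (modBesselH N))⁻¹ l k = 1) ∧
    (∀ l k : Fin N, 1 ≤ (l : ℕ) → (k : ℕ) = 0 → (krylov (modBesselH N))⁻¹ l k = 0) ∧
    (∀ l k : Fin N, 1 ≤ (k : ℕ) →
      (krylov (modBesselH N))⁻¹ l k =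
        2 * (Polynomial.Chebyshev.T ℝ ((k : ℕ) : ℤ)).coeff (l : ℕ)) := by
  set H := modBesselH N with hH
  set M : Matrix (Fin N) (Fin N) ℝ := fun l k =>
    if (k : ℕ) = 0 then (if (l : ℕ) = 0 then 1 else 0)
    else 2 * (Polynomial.Chebyshev.T ℝ ((k : ℕ) : ℤ)).coeff (l : ℕ) with hM
  have key : krylov H * M = 1 := by
    ext i k
    rw [Matrix.mul_apply]
    by_cases hk : (k : ℕ) = 0
    · have h0 : (0 : ℕ) < N := by omega
      have hterm : ∀ j : Fin N, krylov H i j * M j k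
          = if j = (⟨0, h0⟩ : Fin N) then krylov H i (⟨0, h0⟩ : Fin N) else 0 := by
        intro j
        simp only [hM, hk, if_pos rfl]
        by_cases hj : (j : ℕ) = 0
        · have : j = (⟨0, h0⟩ : Fin N) := Fin.ext hj
          simp [this]
        · have : j ≠ (⟨0, h0⟩ : Fin N) := by simp [Fin.ext_iff, hj]
          simp [hj, this]
      rw [Finset.sum_congr rfl (fun j _ => hterm j), Finset.sum_ite_eq' Finset.univ]
      simp only [Finset.mem_univ, if_pos]
      have : krylov H i (⟨0, h0⟩ : Fin N) = e1 N i := by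
        simp [krylov, Matrix.one_mulVec]
      rw [this]
      simp only [Matrix.one_apply, e1, Fin.ext_iff, hk]
    · have hdeg : (Polynomial.Chebyshev.T ℝ ((k : ℕ) : ℤ)).natDegree < N :=
        lt_of_le_of_lt (natDegree_T_le (k : ℕ)) k.isLt
      have haev := Polynomial.aeval_eq_sum_range' hdeg H
      have hch := cheb_mulVec N (k : ℕ) k.isLt
      rw [haev] at hch
      rw [sum_mulVec'] at hch
      have hch' := congrFun hch i
      simp only [Finset.sum_apply, Matrix.smul_mulVec, Pi.smul_apply, smul_eq_mul] at hch'
      have hsum : ∑ j : Fin N, krylov H i j * M j k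
          = 2 * ∑ j ∈ Finset.range N,
              (Polynomial.Chebyshev.T ℝ ((k : ℕ) : ℤ)).coeff j * ((H ^ j) *ᵥ e1 N) i := by
        rw [Finset.mul_sum, ← Fin.sum_univ_eq_sum_range]
        refine Finset.sum_congr rfl fun j _ => ?_
        simp only [hM, krylov, if_neg hk]
        ring
      rw [hsum, hch']
      simp only [chebVecAux, Matrix.one_apply, Fin.ext_iff]
      have hk' : (k : ℕ) ≠ 0 := hk
      split_ifs <;> first | norm_num | omega
  have hunit : IsUnit (krylov H) := (Matrix.isUnit_iff_isUnit_det _).mpr (Matrix.isUnit_det_of_right_inverse key)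
  have hinv : (krylov H)⁻¹ = M := Matrix.inv_eq_right_inv key
  refine ⟨hunit, ?_, ?_, ?_⟩
  · intro l k hl hk
    rw [hinv]
    simp [hM, hl, hk]
  · intro l k hl hk
    rw [hinv]
    have : (l : ℕ) ≠ 0 := by omega
    simp [hM, hk, this]
  · intro l k hk
    rw [hinv]
    have : (k : ℕ) ≠ 0 := by omega
    simp [hM, this]
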